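/- If G is a finite connected simple graph with mr_ℝ(G) ≤ 2, then mr_ℝ(G) ≤ γ_ℝ(G). -/

import Mathlib

open scoped Classical

variable {V : Type*}

/-- The generalized Laplacian matrix `L(G, X_G)` of a simple graph `G`, with entries in the
polynomial ring `R[X_G]`: the `(u,v)` entry is the indeterminate `x_u` if `u = v`,
`-1` if `u` and `v` are adjacent, and `0` otherwise. -/
noncomputable def genLaplacian (R : Type*) [CommRing R] (G : SimpleGraph V) :
    Matrix V V (MvPolynomial V R) := fun u v =>
  if u = v then MvPolynomial.X u else if G.Adj u v then -1 else 0

/-- The ideal generated by the determinants of all `i × i` submatrices of a square matrix. -/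
noncomputable def minorsIdeal {S : Type*} [CommRing S] (M : Matrix V V S) (i : ℕ) : Ideal S :=
  Ideal.span { d : S | ∃ f g : Fin i → V, Function.Injective f ∧ Function.Injective g ∧
    d = (M.submatrix f g).det }

/-- The `i`-th critical ideal `I_i(G, X_G) ⊆ R[X_G]` of a simple graph `G`. -/
noncomputable def criticalIdeal (R : Type*) [CommRing R] (G : SimpleGraph V) (i : ℕ) :
    Ideal (MvPolynomial V R) :=
  minorsIdeal (genLaplacian R G) i

/-- The algebraic co-rank `γ_R(G)`: the largest `i` (with `0 ≤ i ≤ |V(G)|`) such that the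
`i`-th critical ideal of `G` over `R` is trivial (i.e. the whole ring). -/
noncomputable def algCoRank (R : Type*) [CommRing R] [Fintype V] (G : SimpleGraph V) : ℕ :=
  sSup {i | i ≤ Fintype.card V ∧ criticalIdeal R G i = ⊤}

/-- The rank of a square matrix over a commutative ring: the largest `k` such that some
`k × k` minor is nonzero and is not a zero divisor. -/
noncomputable def ringRank {R : Type*} [CommRing R] (M : Matrix V V R) : ℕ :=
  sSup {k | ∃ f g : Fin k → V, Function.Injective f ∧ Function.Injective g ∧
    (M.submatrix f g).det ≠ 0 ∧ (M.submatrix f g).det ∈ nonZeroDivisors R}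

/-- `A ∈ S_R(G)`: `A` is a symmetric matrix over `R`, indexed by the vertices of `G`, whose
off-diagonal `(u,v)` entry is nonzero iff `u` and `v` are adjacent (the diagonal is free). -/
def IsGraphMatrix {R : Type*} [CommRing R] (G : SimpleGraph V) (A : Matrix V V R) : Prop :=
  A.IsSymm ∧ ∀ u v : V, u ≠ v → (A u v ≠ 0 ↔ G.Adj u v)

/-- The minimum rank `mr_R(G)`: the smallest rank among matrices in `S_R(G)`. -/
noncomputable def minRank (R : Type*) [CommRing R] (G : SimpleGraph V) : ℕ :=
  sInf {k | ∃ A : Matrix V V R, IsGraphMatrix G A ∧ ringRank A = k}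

/-- The generalized Laplacian of `G` evaluated at a vector `d`: `L(G, d)` has `d u` on the
diagonal, `-1` at adjacent off-diagonal pairs and `0` elsewhere. -/
noncomputable def evalLaplacian {R : Type*} [CommRing R] (G : SimpleGraph V) (d : V → R) :
    Matrix V V R := fun u v =>
  if u = v then d u else if G.Adj u v then -1 else 0

/-- The critical minimum rank `mr^cr_R(G)`: the minimum of `rank (L(G,d))` over `d ∈ R^{V(G)}`. -/
noncomputable def crMinRank (R : Type*) [CommRing R] (G : SimpleGraph V) : ℕ :=
  sInf {k | ∃ d : V → R, ringRank (evalLaplacian G d) = k}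

/-- `a, b : Fin k → V` form a chronological list of forces for the zero forcing game on `G`
started with the vertices of `B` blue: at step `t` the force `a t → b t` is performed, which
requires that `a t` is blue, that `b t` is a white neighbor of `a t`, and that every white
neighbor of `a t` equals `b t`. -/
def IsChronList (G : SimpleGraph V) (B : Set V) {k : ℕ} (a b : Fin k → V) : Prop :=
  (∀ t, G.Adj (a t) (b t)) ∧
  (∀ t, a t ∈ B ∨ ∃ s, s < t ∧ b s = a t) ∧
  (∀ t, b t ∉ B ∧ ∀ s, s < t → b s ≠ b t) ∧
  (∀ t z, G.Adj (a t) z → z ∉ B → (∀ s, s < t → b s ≠ z) → z = b t)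

/-- `B` is a zero forcing set of `G`: starting with exactly `B` blue, there is a sequence of
forces turning every vertex of `G` blue. -/
def IsZeroForcingSet (G : SimpleGraph V) (B : Set V) : Prop :=
  ∃ (k : ℕ) (a b : Fin k → V), IsChronList G B a b ∧ ∀ v : V, v ∈ B ∨ ∃ t, b t = v

/-- The zero forcing number `Z(G)`: the minimum cardinality of a zero forcing set of `G`. -/
noncomputable def zeroForcingNumber [Fintype V] (G : SimpleGraph V) : ℕ :=
  sInf {m | ∃ B : Finset V, B.card = m ∧ IsZeroForcingSet G ↑B}

/-- `mz(G) = |V(G)| - Z(G)`. -/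
noncomputable def mz [Fintype V] (G : SimpleGraph V) : ℕ :=
  Fintype.card V - zeroForcingNumber G

section Aux

variable {V : Type*}

lemma aux_inj2 {u v : V} (h : u ≠ v) : Function.Injective ![u, v] := by
  intro a b hab
  fin_cases a <;> fin_cases b <;> simp_all

/-- `0` always belongs to the rank set of any matrix over a nontrivial ring. -/
lemma aux_zero_mem_rankSet {R : Type*} [CommRing R] [Nontrivial R] (M : Matrix V V R) :
    (0 : ℕ) ∈ {k | ∃ f g : Fin k → V, Function.Injective f ∧ Function.Injective g ∧
      (M.submatrix f g).det ≠ 0 ∧ (M.submatrix f g).det ∈ nonZeroDivisors R} := by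
  refine ⟨fun x => x.elim0, fun x => x.elim0, fun x => x.elim0, fun x => x.elim0, ?_, ?_⟩
  · simp [Matrix.det_isEmpty]
  · rw [Matrix.det_isEmpty]; exact one_mem _

lemma aux_ringRank_zero [Fintype V] : ringRank (0 : Matrix V V ℝ) = 0 := by
  unfold ringRank
  refine le_antisymm (csSup_le ⟨0, aux_zero_mem_rankSet _⟩ ?_) (Nat.zero_le _)
  rintro k ⟨f, g, hf, hg, hdet, -⟩
  by_contra hk
  have hpos : 0 < k := Nat.pos_of_ne_zero (fun h => hk (h ▸ Nat.le_refl 0))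
  haveI : Nonempty (Fin k) := ⟨⟨0, hpos⟩⟩
  apply hdet
  have : (0 : Matrix V V ℝ).submatrix f g = 0 := rfl
  rw [this, Matrix.det_zero]

/-- If `G` has no edges, its minimum rank is `0`. -/
lemma aux_minRank_of_no_edge [Fintype V] (G : SimpleGraph V) (h : ∀ u v : V, ¬ G.Adj u v) :
    minRank ℝ G = 0 := by
  have h0 : (0 : ℕ) ∈ {k | ∃ A : Matrix V V ℝ, IsGraphMatrix G A ∧ ringRank A = k} := by
    refine ⟨0, ⟨?_, ?_⟩, aux_ringRank_zero⟩
    · simp [Matrix.IsSymm]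
    · intro u v _
      simp [h u v]
  exact le_antisymm (Nat.sInf_le h0) (Nat.zero_le _)

/-- If `G` is complete, its minimum rank is at most `1`. -/
lemma aux_minRank_of_complete [Fintype V] (G : SimpleGraph V)
    (h : ∀ u v : V, u ≠ v → G.Adj u v) : minRank ℝ G ≤ 1 := by
  set A : Matrix V V ℝ := Matrix.of (fun _ _ => (1 : ℝ)) with hA
  have hgm : IsGraphMatrix G A := by
    constructor
    · ext i j; simp [hA, Matrix.transpose_apply]
    · intro u v huv
      simp [hA, h u v huv]
  have hrank : ringRank A ≤ 1 := by
    unfold ringRank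
    refine csSup_le ⟨0, aux_zero_mem_rankSet _⟩ ?_
    rintro k ⟨f, g, hf, hg, hdet, -⟩
    by_contra hk
    push_neg at hk
    have h2 : 2 ≤ k := hk
    apply hdet
    have hne : (⟨0, by omega⟩ : Fin k) ≠ ⟨1, by omega⟩ := by
      intro hc; simpa using congrArg Fin.val hc
    refine Matrix.det_zero_of_row_eq hne ?_
    funext j
    simp [hA, Matrix.submatrix_apply]
  calc minRank ℝ G ≤ ringRank A := Nat.sInf_le ⟨A, hgm, rfl⟩
    _ ≤ 1 := hrank

/-- Connected non-complete graphs contain an induced path on three vertices. -/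
lemma aux_exists_P3 (G : SimpleGraph V) {a b : V} (w : G.Walk a b) :
    a ≠ b → ¬ G.Adj a b →
    ∃ x y z : V, G.Adj x y ∧ G.Adj y z ∧ ¬ G.Adj x z ∧ x ≠ z := by
  induction w with
  | nil => intro hne _; exact absurd rfl hne
  | @cons a c b hac p ih =>
    intro hab hnadj
    by_cases hcb : c = b
    · subst hcb; exact absurd hac hnadj
    · by_cases hadj : G.Adj c b
      · exact ⟨a, c, b, hac, hadj, hnadj, hab⟩
      · exact ih hcb hadj

lemma aux_bddAbove [Fintype V] (G : SimpleGraph V) :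
    BddAbove {i | i ≤ Fintype.card V ∧ criticalIdeal ℝ G i = ⊤} :=
  ⟨Fintype.card V, fun _ hi => hi.1⟩

/-- If `G` has an edge, then `γ_ℝ(G) ≥ 1`. -/
lemma aux_one_le_algCoRank [Fintype V] (G : SimpleGraph V) {u v : V} (huv : G.Adj u v) :
    1 ≤ algCoRank ℝ G := by
  refine le_csSup (aux_bddAbove G) ⟨?_, ?_⟩
  · have : Nonempty V := ⟨u⟩
    exact Fintype.card_pos
  · refine Ideal.eq_top_of_isUnit_mem _ (Ideal.subset_span ?_)
      (isUnit_one.neg : IsUnit (-1 : MvPolynomial V ℝ))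
    refine ⟨fun _ => u, fun _ => v, fun a b _ => Subsingleton.elim a b,
      fun a b _ => Subsingleton.elim a b, ?_⟩
    rw [Matrix.det_fin_one]
    simp [genLaplacian, huv.ne, huv]

/-- If `G` has an induced `P₃`, then `γ_ℝ(G) ≥ 2`. -/
lemma aux_two_le_algCoRank [Fintype V] (G : SimpleGraph V) {x y z : V}
    (hxy : G.Adj x y) (hyz : G.Adj y z) (hnxz : ¬ G.Adj x z) (hxz : x ≠ z) :
    2 ≤ algCoRank ℝ G := by
  refine le_csSup (aux_bddAbove G) ⟨?_, ?_⟩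
  · haveI : Nontrivial V := ⟨x, y, hxy.ne⟩
    exact Fintype.one_lt_card
  · rw [Ideal.eq_top_iff_one]
    refine Ideal.subset_span ?_
    refine ⟨![x, y], ![y, z], aux_inj2 hxy.ne, aux_inj2 hyz.ne, ?_⟩
    rw [Matrix.det_fin_two]
    simp [Matrix.submatrix_apply, genLaplacian, hxy.ne, hyz.ne, hxz, hxy, hnxz,
      (G.adj_symm hxy).ne]
    simp [hyz]

end Aux

/-- If `G` is a finite connected simple graph with `mr_ℝ(G) ≤ 2`, then
`mr_ℝ(G) ≤ γ_ℝ(G)`. -/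
theorem minRank_le_algCoRank_of_minRank_le_two {V : Type*} [Fintype V] (G : SimpleGraph V)
    (hconn : G.Connected) (h : minRank ℝ G ≤ 2) :
    minRank ℝ G ≤ algCoRank ℝ G := by
  have hcases : minRank ℝ G = 0 ∨ minRank ℝ G = 1 ∨ minRank ℝ G = 2 := by omega
  rcases hcases with h0 | h1 | h2
  · rw [h0]; exact Nat.zero_le _
  · -- there is an edge, since otherwise `minRank` would be `0`
    have hedge : ∃ u v : V, G.Adj u v := by
      by_contra hno
      push_neg at hno
      rw [aux_minRank_of_no_edge G hno] at h1
      exact absurd h1 (by norm_num)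
    obtain ⟨u, v, huv⟩ := hedge
    rw [h1]
    exact aux_one_le_algCoRank G huv
  · -- `G` is not complete, since otherwise `minRank ≤ 1`
    have hnc : ∃ a b : V, a ≠ b ∧ ¬ G.Adj a b := by
      by_contra hno
      push_neg at hno
      have := aux_minRank_of_complete G hno
      omega
    obtain ⟨a, b, hab, hnadj⟩ := hnc
    obtain ⟨w⟩ := hconn a b
    obtain ⟨x, y, z, hxy, hyz, hnxz, hxz⟩ := aux_exists_P3 G w hab hnadj
    rw [h2]
    exact aux_two_le_algCoRank G hxy hyz hnxz hxz
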